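/- Let n ≥ 2 and let G be a finite directed graph on vertex set {1,…,n} that is inductively strongly connected with respect to the ordering 1,2,…,n (so for every i the induced subgraph on {1,…,i} is strongly connected; in particular both 1→2 and 2→1 are edges of G). Let G′ be the directed graph on vertex set {2,…,n} obtained by collapsing vertices 1 and 2: for distinct i, j ∈ {2,…,n}, i→j is an edge of G′ if and only if i→j is an edge of G, or i = 2 and 1→j is an edge of G, or j = 2 and i→1 is an edge of G. Then G′ is inductively strongly connected with distinguished vertex 2, with respect to the ordering 2,3,…,n. -/

import Mathlib

/-- The induced subgraph of the digraph with edge set `E` on the vertex set `S` is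
strongly connected. -/
def InducedSC {n : ℕ} (E : Finset (Fin n × Fin n)) (S : Finset (Fin n)) : Prop :=
  ∀ u ∈ S, ∀ v ∈ S,
    Relation.ReflTransGen (fun a b => (a, b) ∈ E ∧ a ∈ S ∧ b ∈ S) u v

/-- Let `G` be a digraph on `n + 2 ≥ 2` vertices which is inductively
strongly connected with respect to the ordering `0, 1, …, n + 1` (every initial segment
`{0, …, i}` induces a strongly connected subgraph).  Let `G′` on `n + 1` vertices be the
graph obtained by collapsing vertices `0` and `1` (vertex `j` of `G′` corresponds to
vertex `j + 1` of `G`, and the distinguished vertex `0` of `G′` is the collapsed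
vertex): for `i ≠ j`, `i → j` in `G′` iff `i → j` in `G`, or `i = 0` and `0 → j` in
`G`, or `j = 0` and `i → 0` in `G`.  Then `G′` is inductively strongly connected with
respect to the ordering `0, 1, …, n`. -/
theorem statement19 (n : ℕ) (E : Finset (Fin (n + 2) × Fin (n + 2)))
    (hloop : ∀ e ∈ E, e.1 ≠ e.2)
    (hisc : ∀ i : Fin (n + 2), InducedSC E (Finset.Iic i))
    (E' : Finset (Fin (n + 1) × Fin (n + 1)))
    (hE' : ∀ p : Fin (n + 1) × Fin (n + 1), p ∈ E' ↔ p.1 ≠ p.2 ∧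
      ((p.1.succ, p.2.succ) ∈ E ∨
       (p.1 = 0 ∧ ((0 : Fin (n + 2)), p.2.succ) ∈ E) ∨
       (p.2 = 0 ∧ (p.1.succ, (0 : Fin (n + 2))) ∈ E))) :
    ∀ i : Fin (n + 1), InducedSC E' (Finset.Iic i) := by
  intro i
  -- the collapse map
  let c : Fin (n + 2) → Fin (n + 1) := fun v => ⟨v.val - 1, by omega⟩
  have hval : ∀ v : Fin (n + 2), (c v).val = v.val - 1 := fun v => rfl
  have hcsucc : ∀ v : Fin (n + 2), 1 ≤ v.val → (c v).succ = v := by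
    intro v hv
    apply Fin.ext
    rw [Fin.val_succ, hval]
    omega
  have hmem : ∀ v : Fin (n + 2), v ∈ Finset.Iic i.succ → c v ∈ Finset.Iic i := by
    intro v hv
    rw [Finset.mem_Iic] at hv ⊢
    have : v.val ≤ i.succ.val := hv
    have : (c v).val ≤ i.val := by rw [hval]; rw [Fin.val_succ] at this; omega
    exact this
  -- one step in E maps to ≤1 step in E'
  have hstep : ∀ u v : Fin (n + 2),
      ((u, v) ∈ E ∧ u ∈ Finset.Iic i.succ ∧ v ∈ Finset.Iic i.succ) →
      Relation.ReflTransGen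
        (fun a b => (a, b) ∈ E' ∧ a ∈ Finset.Iic i ∧ b ∈ Finset.Iic i) (c u) (c v) := by
    intro u v ⟨hE, hu, hv⟩
    by_cases hcc : c u = c v
    · rw [hcc]
    · refine Relation.ReflTransGen.single ⟨?_, hmem u hu, hmem v hv⟩
      rw [hE' (c u, c v)]
      refine ⟨hcc, ?_⟩
      by_cases hu1 : 1 ≤ u.val
      · by_cases hv1 : 1 ≤ v.val
        · left; rw [hcsucc u hu1, hcsucc v hv1]; exact hE
        · -- v = 0
          have hv0 : v = 0 := by apply Fin.ext; show v.val = 0; omega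
          right; right
          constructor
          · apply Fin.ext; rw [hval]; simp; omega
          · rw [hcsucc u hu1, ← hv0]; exact hE
      · -- u = 0
        have hu0 : u = 0 := by apply Fin.ext; show u.val = 0; omega
        have hv1 : 1 ≤ v.val := by
          by_contra h
          apply hcc
          apply Fin.ext
          rw [hval, hval]; omega
        right; left
        constructor
        · apply Fin.ext; rw [hval]; simp; omega
        · rw [hcsucc v hv1, ← hu0]; exact hE
  intro u hu v hv
  have hu' : u.succ ∈ Finset.Iic i.succ := by
    rw [Finset.mem_Iic] at hu ⊢
    exact Fin.succ_le_succ_iff.mpr hu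
  have hv' : v.succ ∈ Finset.Iic i.succ := by
    rw [Finset.mem_Iic] at hv ⊢
    exact Fin.succ_le_succ_iff.mpr hv
  have hpath := hisc i.succ u.succ hu' v.succ hv'
  have hcu : c u.succ = u := by apply Fin.ext; rw [hval]; simp
  have hcv : c v.succ = v := by apply Fin.ext; rw [hval]; simp
  have key : ∀ a b : Fin (n + 2),
      Relation.ReflTransGen
        (fun a b => (a, b) ∈ E ∧ a ∈ Finset.Iic i.succ ∧ b ∈ Finset.Iic i.succ) a b →
      Relation.ReflTransGen
        (fun a b => (a, b) ∈ E' ∧ a ∈ Finset.Iic i ∧ b ∈ Finset.Iic i) (c a) (c b) := by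
    intro a b hab
    induction hab with
    | refl => exact Relation.ReflTransGen.refl
    | tail _ hstep' ih => exact ih.trans (hstep _ _ hstep')
  rw [← hcu, ← hcv]
  exact key _ _ hpath
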